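/- Let $D_g > 0$, $D_j > 0$ for $j \in J$ with $|J| = M - 1 \ge 1$, $\bar F = (\sum_{j \in J} 1/D_j)^{-1}$, $\tilde K = (\min_{j\in J} D_j)/\bar F$, $F(\kappa) = \min\{\kappa \bar F, \min_{j\in J} D_j\}$, and $h(u) = u D_g + F(K-u)$ on $u \in [0,1]$ with real $K \ge 1$. If $D_g < \bar F$ and $\tilde K < K < \tilde K + 1$, then $h$ attains its maximum uniquely at the interior point $u^* = K - \tilde K \in (0,1)$, and $h(u^*) > \max\{h(0), h(1)\}$. -/

import Mathlib

open Finset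

theorem stmt_19 {ι : Type*} (J : Finset ι) (hJ : J.Nonempty)
    (D : ι → ℝ) (hD : ∀ j ∈ J, 0 < D j) (Dg : ℝ) (hDg : 0 < Dg)
    (barF : ℝ) (hbarF : barF = (∑ j ∈ J, 1 / D j)⁻¹)
    (tildeK : ℝ) (htildeK : tildeK = J.inf' hJ D / barF)
    (F : ℝ → ℝ) (hF : ∀ κ, 0 ≤ κ → F κ = min (κ * barF) (J.inf' hJ D))
    (K : ℝ) (hK : 1 ≤ K)
    (hlt : Dg < barF) (h1 : tildeK < K) (h2 : K < tildeK + 1) :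
    K - tildeK ∈ Set.Ioo (0:ℝ) 1 ∧
      (∀ u ∈ Set.Icc (0:ℝ) 1, u ≠ K - tildeK →
        u * Dg + F (K - u) < (K - tildeK) * Dg + F (K - (K - tildeK))) ∧
      max (0 * Dg + F (K - 0)) (1 * Dg + F (K - 1)) <
        (K - tildeK) * Dg + F (K - (K - tildeK)) := by
  have hm : 0 < J.inf' hJ D := by
    rw [Finset.lt_inf'_iff]; exact hD
  have hsum : 0 < ∑ j ∈ J, 1 / D j :=
    Finset.sum_pos (fun j hj => one_div_pos.mpr (hD j hj)) hJ
  have hbarF0 : 0 < barF := hbarF ▸ inv_pos.mpr hsum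
  have hprod : tildeK * barF = J.inf' hJ D := by
    rw [htildeK]; field_simp
  have htK0 : 0 < tildeK := by
    rw [htildeK]; positivity
  have hFstar : F (K - (K - tildeK)) = J.inf' hJ D := by
    have : K - (K - tildeK) = tildeK := by ring
    rw [this, hF _ htK0.le, hprod, min_self]
  have hmain : ∀ u ∈ Set.Icc (0:ℝ) 1, u ≠ K - tildeK →
      u * Dg + F (K - u) < (K - tildeK) * Dg + F (K - (K - tildeK)) := by
    intro u hu hne
    have hKu : 0 ≤ K - u := by linarith [hu.2]
    rw [hFstar, hF _ hKu]
    rcases lt_or_gt_of_ne hne with h | h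
    · have : J.inf' hJ D < (K - u) * barF := by
        rw [← hprod]
        have : tildeK < K - u := by linarith
        nlinarith
      rw [min_eq_right this.le]
      nlinarith
    · have : (K - u) * barF < J.inf' hJ D := by
        rw [← hprod]
        have : K - u < tildeK := by linarith
        nlinarith
      rw [min_eq_left this.le, ← hprod]
      nlinarith [mul_pos (sub_pos.mpr h) (sub_pos.mpr hlt)]
  refine ⟨⟨by linarith, by linarith⟩, hmain, ?_⟩
  apply max_lt
  · exact hmain 0 ⟨le_refl 0, zero_le_one⟩ (by intro h; linarith)
  · exact hmain 1 ⟨zero_le_one, le_refl 1⟩ (by intro h; linarith)
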